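/- Let S ⊂ ℤ_{≥0} be a numerical semigroup that is symmetric (Gorenstein) with multiplicity m = min(S \ {0}) ≥ 3, and suppose S ∩ (m, 2m) contains at most one element. Then every local minimum point p of the weight function w with p ∉ {0, c} satisfies w(p) ≤ w(m) = 2 − m. Consequently max{w(p) : p local minimum, w(p) < 0} = 2 − m (the Multiplicity Formula holds). -/

import Mathlib

open Classical Finset in
private lemma ico_succ_int (a b : ℤ) (h : a ≤ b) :
    Finset.Ico a (b + 1) = insert b (Finset.Ico a b) := by
  ext x
  simp only [Finset.mem_Ico, Finset.mem_insert]
  omega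

private lemma mul_mem_int (S : Set ℤ) (hS0 : (0:ℤ) ∈ S)
    (hSadd : ∀ s ∈ S, ∀ t ∈ S, s + t ∈ S) (m : ℤ) (hm : m ∈ S) :
    ∀ n : ℕ, (n : ℤ) * m ∈ S := by
  intro n
  induction n with
  | zero => simpa using hS0
  | succ k ih =>
      have hadd := hSadd _ ih m hm
      have e : ((k : ℤ)) * m + m = ((k+1 : ℕ) : ℤ) * m := by push_cast; ring
      rwa [e] at hadd

open Classical Finset in
private lemma filter_not_card (S : Set ℤ) (s : Finset ℤ) :
    (s.filter (· ∈ S)).card + (s.filter (fun x => x ∉ S)).card = s.card := by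
  classical
  rw [← Finset.card_union_of_disjoint]
  · congr 1
    ext x
    simp only [Finset.mem_union, Finset.mem_filter]
    tauto
  · rw [Finset.disjoint_left]
    intro a ha hb
    simp only [Finset.mem_filter] at ha hb
    exact hb.2 ha.2

open Classical Finset in
private lemma key_big (S : Set ℤ)
    (hS0 : (0:ℤ) ∈ S)
    (hSadd : ∀ s ∈ S, ∀ t ∈ S, s + t ∈ S)
    (c m : ℤ) (hm : m ∈ S) (hmmin : ∀ s ∈ S, s ≠ 0 → m ≤ s) (hm3 : 3 ≤ m)
    (hsym : ∀ ℓ : ℤ, 0 ≤ ℓ → (ℓ ∈ S ↔ c - 1 - ℓ ∉ S))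
    (p : ℤ) (hp2m : 2 * m ≤ p) (hpc : 2 * p ≤ c) (hp1 : p - 1 ∉ S) :
    2 * (((Finset.Ico 0 p).filter (· ∈ S)).card : ℤ) + (m - 2) ≤ p := by
  classical
  have hm0 : (0:ℤ) < m := by omega
  have hp0 : (0:ℤ) < p := by omega
  set T := (Finset.Ico 0 p).filter (· ∈ S) with hT
  set G := (Finset.Ico 0 p).filter (fun x => x ∉ S) with hG
  have hTG : T.card + G.card = (Finset.Ico (0:ℤ) p).card := filter_not_card S _
  have hIco : ((Finset.Ico (0:ℤ) p).card : ℤ) = p := by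
    rw [Int.card_Ico]; omega
  have hmemT : ∀ s ∈ T, 0 ≤ s ∧ s < p ∧ s ∈ S := by
    intro s hs
    simp only [hT, Finset.mem_filter, Finset.mem_Ico] at hs
    exact ⟨hs.1.1, hs.1.2, hs.2⟩
  set σT := T.image (fun s => p - 1 - s) with hσ
  have hσcard : σT.card = T.card :=
    Finset.card_image_of_injOn (by intro a _ b _ hab; dsimp only at hab; omega)
  have hσsub : σT ⊆ G := by
    intro x hx
    obtain ⟨s, hs, rfl⟩ := Finset.mem_image.mp hx
    obtain ⟨h1, h2, h3⟩ := hmemT s hs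
    simp only [hG, Finset.mem_filter, Finset.mem_Ico]
    refine ⟨⟨by omega, by omega⟩, ?_⟩
    intro hmem
    have hadd := hSadd _ hmem _ h3
    have e : p - 1 - s + s = p - 1 := by ring
    rw [e] at hadd
    exact hp1 hadd
  set D := G.filter (fun d => p - 1 - d ∉ S) with hD
  have hdisj : Disjoint σT D := by
    rw [Finset.disjoint_left]
    intro x hxσ hxD
    obtain ⟨s, hs, rfl⟩ := Finset.mem_image.mp hxσ
    have hsS := (hmemT s hs).2.2
    simp only [hD, Finset.mem_filter] at hxD
    have e : p - 1 - (p - 1 - s) = s := by ring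
    rw [e] at hxD
    exact hxD.2 hsS
  have hGbound : σT.card + D.card ≤ G.card := by
    rw [← Finset.card_union_of_disjoint hdisj]
    exact Finset.card_le_card (Finset.union_subset hσsub (Finset.filter_subset _ _))
  -- lower bound on D.card
  set D1 := (Finset.Ico (1:ℤ) m).filter (fun d => p - 1 - d ∉ S) with hD1
  set W := (Finset.Ico (1:ℤ) m).filter (fun d => p - 1 - d ∈ S) with hW
  have hWD1 : W.card + D1.card = (Finset.Ico (1:ℤ) m).card := by
    have := filter_not_card {x : ℤ | p - 1 - x ∈ S} (Finset.Ico (1:ℤ) m)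
    simpa using this
  have hIco1m : ((Finset.Ico (1:ℤ) m).card : ℤ) = m - 1 := by
    rw [Int.card_Ico]; omega
  have hmemW : ∀ d ∈ W, 1 ≤ d ∧ d < m ∧ p - 1 - d ∈ S := by
    intro d hd; simp only [hW, Finset.mem_filter, Finset.mem_Ico] at hd
    exact ⟨hd.1.1, hd.1.2, hd.2⟩
  -- residue argument: 2 * W.card ≤ m
  have hres : 2 * (W.card : ℤ) ≤ m := by
    set R1 := W.image (fun d => (p - 1 - d) % m) with hR1
    set R2 := W.image (fun d => (c - p + d) % m) with hR2
    have hc1 : R1.card = W.card := by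
      apply Finset.card_image_of_injOn
      intro a ha b hb hab
      dsimp only at hab
      obtain ⟨ha1, ha2, _⟩ := hmemW a ha
      obtain ⟨hb1, hb2, _⟩ := hmemW b hb
      have h0 : ((p - 1 - a) - (p - 1 - b)) % m = 0 :=
        Int.emod_eq_emod_iff_emod_sub_eq_zero.mp hab
      have hdvd : m ∣ (p - 1 - a) - (p - 1 - b) := Int.dvd_of_emod_eq_zero h0
      obtain ⟨t, ht⟩ := hdvd
      have ht0 : t = 0 := by
        by_contra hcon
        rcases lt_or_gt_of_ne hcon with hlt | hgt
        · have : m * t ≤ m * (-1) := by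
            apply mul_le_mul_of_nonneg_left (by omega) hm0.le
          omega
        · have : m * 1 ≤ m * t := by
            apply mul_le_mul_of_nonneg_left (by omega) hm0.le
          omega
      rw [ht0] at ht
      omega
    have hc2 : R2.card = W.card := by
      apply Finset.card_image_of_injOn
      intro a ha b hb hab
      dsimp only at hab
      obtain ⟨ha1, ha2, _⟩ := hmemW a ha
      obtain ⟨hb1, hb2, _⟩ := hmemW b hb
      have h0 : ((c - p + a) - (c - p + b)) % m = 0 :=
        Int.emod_eq_emod_iff_emod_sub_eq_zero.mp hab
      have hdvd : m ∣ (c - p + a) - (c - p + b) := Int.dvd_of_emod_eq_zero h0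
      obtain ⟨t, ht⟩ := hdvd
      have ht0 : t = 0 := by
        by_contra hcon
        rcases lt_or_gt_of_ne hcon with hlt | hgt
        · have : m * t ≤ m * (-1) := by
            apply mul_le_mul_of_nonneg_left (by omega) hm0.le
          omega
        · have : m * 1 ≤ m * t := by
            apply mul_le_mul_of_nonneg_left (by omega) hm0.le
          omega
      rw [ht0] at ht
      omega
    have hdisjR : Disjoint R1 R2 := by
      rw [Finset.disjoint_left]
      intro x hx1 hx2
      obtain ⟨a, ha, hxa⟩ := Finset.mem_image.mp hx1
      obtain ⟨b, hb, hxb⟩ := Finset.mem_image.mp hx2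
      obtain ⟨ha1, ha2, haS⟩ := hmemW a ha
      obtain ⟨hb1, hb2, hbS⟩ := hmemW b hb
      have hab : (c - p + b) % m = (p - 1 - a) % m := by rw [hxa, hxb]
      have h0 : ((c - p + b) - (p - 1 - a)) % m = 0 :=
        Int.emod_eq_emod_iff_emod_sub_eq_zero.mp hab
      have hdvd : m ∣ (c - p + b) - (p - 1 - a) := Int.dvd_of_emod_eq_zero h0
      obtain ⟨j, hj⟩ := hdvd
      have hj1 : 1 ≤ j := by
        by_contra hcon
        push_neg at hcon
        have h1 : m * j ≤ 0 := mul_nonpos_iff.mpr (Or.inl ⟨hm0.le, by omega⟩)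
        linarith
      have hjm : (j.toNat : ℤ) * m ∈ S := mul_mem_int S hS0 hSadd m hm j.toNat
      have hjm' : m * j ∈ S := by
        have e : (j.toNat : ℤ) = j := Int.toNat_of_nonneg (by omega)
        rw [e, mul_comm] at hjm
        exact hjm
      have hsum : (p - 1 - b) + (p - 1 - a) ∈ S := hSadd _ hbS _ haS
      have hnn : (0:ℤ) ≤ (p - 1 - b) + (p - 1 - a) := by omega
      have hns := (hsym _ hnn).mp hsum
      apply hns
      have e : c - 1 - ((p - 1 - b) + (p - 1 - a)) = m * j := by linarith
      rw [e]
      exact hjm'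
    have hsubU : R1 ∪ R2 ⊆ Finset.Ico (0:ℤ) m := by
      intro x hx
      rcases Finset.mem_union.mp hx with hx | hx <;>
      · obtain ⟨a, _, rfl⟩ := Finset.mem_image.mp hx
        simp only [Finset.mem_Ico]
        exact ⟨Int.emod_nonneg _ (by omega), Int.emod_lt_of_pos _ hm0⟩
    have hcardU : R1.card + R2.card ≤ (Finset.Ico (0:ℤ) m).card := by
      rw [← Finset.card_union_of_disjoint hdisjR]
      exact Finset.card_le_card hsubU
    have hIcom : ((Finset.Ico (0:ℤ) m).card : ℤ) = m := by rw [Int.card_Ico]; omega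
    omega
  -- D1 and its mirror D2 sit inside D
  set D2 := D1.image (fun d => p - 1 - d) with hD2
  have hD2card : D2.card = D1.card :=
    Finset.card_image_of_injOn (by intro a _ b _ hab; dsimp only at hab; omega)
  have hmemD1 : ∀ d ∈ D1, 1 ≤ d ∧ d < m ∧ p - 1 - d ∉ S := by
    intro d hd; simp only [hD1, Finset.mem_filter, Finset.mem_Ico] at hd
    exact ⟨hd.1.1, hd.1.2, hd.2⟩
  have hsmall_not : ∀ d : ℤ, 1 ≤ d → d < m → d ∉ S := by
    intro d h1 h2 hdS
    have := hmmin d hdS (by omega)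
    omega
  have hD1sub : D1 ⊆ D := by
    intro d hd
    obtain ⟨h1, h2, h3⟩ := hmemD1 d hd
    simp only [hD, hG, Finset.mem_filter, Finset.mem_Ico]
    exact ⟨⟨⟨by omega, by omega⟩, hsmall_not d h1 h2⟩, h3⟩
  have hD2sub : D2 ⊆ D := by
    intro x hx
    obtain ⟨d, hd, rfl⟩ := Finset.mem_image.mp hx
    obtain ⟨h1, h2, h3⟩ := hmemD1 d hd
    simp only [hD, hG, Finset.mem_filter, Finset.mem_Ico]
    refine ⟨⟨⟨by omega, by omega⟩, h3⟩, ?_⟩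
    have e : p - 1 - (p - 1 - d) = d := by ring
    rw [e]
    exact hsmall_not d h1 h2
  have hdisjD12 : Disjoint D1 D2 := by
    rw [Finset.disjoint_left]
    intro x hx1 hx2
    obtain ⟨h1, h2, _⟩ := hmemD1 x hx1
    obtain ⟨d, hd, hx⟩ := Finset.mem_image.mp hx2
    obtain ⟨g1, g2, _⟩ := hmemD1 d hd
    omega
  have hDbound : D1.card + D2.card ≤ D.card := by
    rw [← Finset.card_union_of_disjoint hdisjD12]
    exact Finset.card_le_card (Finset.union_subset hD1sub hD2sub)
  omega

-- STATEMENT 16: Multiplicity Formula for symmetric (Gorenstein) numerical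
-- semigroups with multiplicity `m ≥ 3` having at most one semigroup element in
-- `(m, 2m)`: every local minimum `p ∉ {0, c}` of the weight function satisfies
-- `w(p) ≤ w(m) = 2 − m`, and `m` itself is a local minimum with `w(m) = 2 − m`
-- (so the maximum of the negative local minimum values is `2 − m`).
open Classical in
theorem stmt16 (S : Set ℤ) (hS0 : (0 : ℤ) ∈ S) (hSnn : ∀ s ∈ S, 0 ≤ s)
    (hSadd : ∀ s ∈ S, ∀ t ∈ S, s + t ∈ S)
    (c : ℤ) (hc0 : 0 ≤ c) (hc : ∀ x : ℤ, c ≤ x → x ∈ S)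
    (hcmin : ∀ c' : ℤ, 0 ≤ c' → (∀ x : ℤ, c' ≤ x → x ∈ S) → c ≤ c')
    (m : ℤ) (hm : m ∈ S) (hmne : m ≠ 0) (hmmin : ∀ s ∈ S, s ≠ 0 → m ≤ s)
    (hm3 : 3 ≤ m)
    (hsym : ∀ ℓ : ℤ, 0 ≤ ℓ → (ℓ ∈ S ↔ c - 1 - ℓ ∉ S))
    (hgap : ∀ p ∈ S, ∀ q ∈ S, m < p → p < 2 * m → m < q → q < 2 * m → p = q)
    (h w : ℤ → ℤ)
    (hh : ∀ ℓ : ℤ, 0 ≤ ℓ → h ℓ = ((Finset.Ico 0 ℓ).filter (· ∈ S)).card)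
    (hw : ∀ ℓ : ℤ, w ℓ = 2 * h ℓ - ℓ) :
    (∀ p : ℤ, 0 ≤ p → ((1 ≤ p → w p < w (p - 1)) ∧ w p < w (p + 1)) →
      p ≠ 0 → p ≠ c → w p ≤ 2 - m) ∧
    ((1 ≤ m → w m < w (m - 1)) ∧ w m < w (m + 1)) ∧ w m = 2 - m := by
  classical
  have hm0 : (0:ℤ) < m := by omega
  -- step formula for w
  have hwstep : ∀ ℓ : ℤ, 0 ≤ ℓ → w (ℓ + 1) = w ℓ + (if ℓ ∈ S then 1 else -1) := by
    intro ℓ h0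
    have h1 := hh ℓ h0
    have h2 := hh (ℓ + 1) (by omega)
    rw [ico_succ_int 0 ℓ h0, Finset.filter_insert] at h2
    have hnotmem : ℓ ∉ (Finset.Ico 0 ℓ).filter (· ∈ S) := by
      simp only [Finset.mem_filter, Finset.mem_Ico]
      intro hcon
      omega
    by_cases hmem : ℓ ∈ S
    · rw [if_pos hmem, Finset.card_insert_of_notMem hnotmem] at h2
      rw [hw (ℓ+1), hw ℓ, if_pos hmem, h1, h2]
      push_cast
      ring
    · rw [if_neg hmem] at h2
      rw [hw (ℓ+1), hw ℓ, if_neg hmem, h1, h2]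
      ring
  have hm1S : m - 1 ∉ S := by
    intro hmem
    have := hmmin _ hmem (by omega)
    omega
  -- value of h on (0, m]
  have hfm : ∀ t : ℤ, 1 ≤ t → t ≤ m → h t = 1 := by
    intro t h1 h2
    rw [hh t (by omega)]
    have he : (Finset.Ico 0 t).filter (· ∈ S) = {0} := by
      ext x
      simp only [Finset.mem_filter, Finset.mem_Ico, Finset.mem_singleton]
      constructor
      · rintro ⟨⟨hx0, hxt⟩, hxS⟩
        by_contra hne
        have := hmmin x hxS hne
        omega
      · rintro rfl
        exact ⟨⟨le_refl _, by omega⟩, hS0⟩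
    rw [he]
    simp
  have hwm : w m = 2 - m := by
    rw [hw m, hfm m (by omega) (le_refl m)]
    ring
  have hwm1 : w m < w (m + 1) := by
    have := hwstep m (by omega)
    rw [if_pos hm] at this
    omega
  have hwm0 : 1 ≤ m → w m < w (m - 1) := by
    intro _
    have hst := hwstep (m - 1) (by omega)
    have e : m - 1 + 1 = m := by ring
    rw [e, if_neg hm1S] at hst
    omega
  -- counting of gaps vs high elements by symmetry
  have hcardhigh : ∀ t : ℤ, 0 ≤ t → t ≤ c →
      ((Finset.Ico (c - t) c).filter (· ∈ S)).card
        = ((Finset.Ico 0 t).filter (fun x => x ∉ S)).card := by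
    intro t h0 htc
    apply Finset.card_nbij' (i := fun x => c - 1 - x) (j := fun d => c - 1 - d)
    · intro x hx
      simp only [Finset.mem_coe, Finset.mem_filter, Finset.mem_Ico] at hx ⊢
      obtain ⟨⟨hx1, hx2⟩, hxS⟩ := hx
      refine ⟨⟨by omega, by omega⟩, ?_⟩
      intro hmem
      have hiff := hsym (c - 1 - x) (by omega)
      have e : c - 1 - (c - 1 - x) = x := by ring
      rw [e] at hiff
      exact (hiff.mp hmem) hxS
    · intro d hd
      simp only [Finset.mem_coe, Finset.mem_filter, Finset.mem_Ico] at hd ⊢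
      obtain ⟨⟨hd1, hd2⟩, hdS⟩ := hd
      refine ⟨⟨by omega, by omega⟩, ?_⟩
      by_contra hns
      exact hdS ((hsym d hd1).mpr hns)
    · intro x _
      ring
    · intro d _
      ring
  have hgapcount : ∀ t : ℤ, 0 ≤ t →
      (((Finset.Ico 0 t).filter (fun x => x ∉ S)).card : ℤ)
        = t - ((Finset.Ico 0 t).filter (· ∈ S)).card := by
    intro t h0
    have h1 := filter_not_card S (Finset.Ico (0:ℤ) t)
    have h2 : ((Finset.Ico (0:ℤ) t).card : ℤ) = t := by rw [Int.card_Ico]; omega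
    omega
  -- reflection formula for w
  have hwrefl : ∀ t : ℤ, 0 ≤ t → t ≤ c → w (c - t) = w t := by
    intro t h0 htc
    have e1 := hcardhigh t h0 htc
    have e3 := hgapcount t h0
    have e4 := hcardhigh c hc0 (le_refl c)
    rw [sub_self] at e4
    have e5 := hgapcount c hc0
    have e2 : ((Finset.Ico (0:ℤ) c).filter (· ∈ S)).card
        = ((Finset.Ico (0:ℤ) (c - t)).filter (· ∈ S)).card
          + ((Finset.Ico (c - t) c).filter (· ∈ S)).card := by
      have hu : Finset.Ico (0:ℤ) c = Finset.Ico 0 (c - t) ∪ Finset.Ico (c - t) c :=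
        (Finset.Ico_union_Ico_eq_Ico (by omega) (by omega)).symm
      rw [hu, Finset.filter_union, Finset.card_union_of_disjoint]
      exact Finset.disjoint_filter_filter (Finset.Ico_disjoint_Ico_consecutive 0 (c - t) c)
    have f1 := hh t h0
    have f2 := hh (c - t) (by omega)
    have f3 := hh c hc0
    have g1 := hw t
    have g2 := hw (c - t)
    omega
  -- the key bound for local minima in the lower half
  have hkey : ∀ q : ℤ, q ∈ S → q - 1 ∉ S → m ≤ q → 2 * q ≤ c → w q ≤ 2 - m := by
    intro q hqS hq1S hqm hqc
    rcases eq_or_lt_of_le hqm with heq | hqm'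
    · rw [← heq, hwm]
    · have hq2 : m + 2 ≤ q := by
        by_contra hcon
        have he : q - 1 = m := by omega
        rw [he] at hq1S
        exact hq1S hm
      rcases lt_or_ge q (2*m) with hq2m | hq2m
      · -- middle case: h q = 2
        have hfq : (Finset.Ico 0 q).filter (· ∈ S) = {0, m} := by
          ext x
          simp only [Finset.mem_filter, Finset.mem_Ico, Finset.mem_insert,
            Finset.mem_singleton]
          constructor
          · rintro ⟨⟨hx0, hxq⟩, hxS⟩
            rcases eq_or_ne x 0 with rfl | hne
            · exact Or.inl rfl
            · have hxm := hmmin x hxS hne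
              rcases eq_or_lt_of_le hxm with heq2 | hlt
              · exact Or.inr heq2.symm
              · exfalso
                have := hgap x hxS q hqS hlt (by omega) hqm' hq2m
                omega
          · rintro (rfl | rfl)
            · exact ⟨⟨le_refl _, by omega⟩, hS0⟩
            · exact ⟨⟨by omega, by omega⟩, hm⟩
        have hc2 : ({0, m} : Finset ℤ).card = 2 := by
          rw [Finset.card_insert_of_notMem (by simp [hmne]; omega), Finset.card_singleton]
        have hhq : h q = 2 := by
          rw [hh q (by omega), hfq, hc2]
          norm_num
        rw [hw q, hhq]
        omega
      · -- big case
        have hbig := key_big S hS0 hSadd c m hm hmmin hm3 hsym q hq2m hqc hq1S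
        have := hh q (by omega)
        have := hw q
        omega
  refine ⟨?_, ⟨hwm0, hwm1⟩, hwm⟩
  intro p hp0 hloc hpne0 hpnec
  have hp1' : (1:ℤ) ≤ p := by omega
  have hpS : p ∈ S := by
    by_contra hns
    have := hwstep p hp0
    rw [if_neg hns] at this
    have h2 := hloc.2
    omega
  have hp1S : p - 1 ∉ S := by
    intro hmem
    have hst := hwstep (p - 1) (by omega)
    have e : p - 1 + 1 = p := by ring
    rw [e, if_pos hmem] at hst
    have h2 := hloc.1 hp1'
    omega
  have hpm : m ≤ p := hmmin p hpS hpne0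
  have hpc' : p < c := by
    rcases lt_or_ge p c with hx | hx
    · exact hx
    · exact absurd (hc (p-1) (by omega)) hp1S
  rcases le_or_gt (2*p) c with hcase | hcase
  · exact hkey p hpS hp1S hpm hcase
  · -- reflect p to c - p
    have hq' := hsym (p - 1) (by omega)
    have e1 : c - 1 - (p - 1) = c - p := by ring
    rw [e1] at hq'
    have hqS : c - p ∈ S := by
      by_contra hns
      exact hp1S (hq'.mpr hns)
    have hq1S : c - p - 1 ∉ S := by
      have h'' := hsym p hp0
      have e2 : c - 1 - p = c - p - 1 := by ring
      rw [e2] at h''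
      exact h''.mp hpS
    have hqm : m ≤ c - p := hmmin _ hqS (by omega)
    have hres := hkey (c - p) hqS hq1S hqm (by omega)
    have hrefl := hwrefl p (by omega) (by omega)
    omega
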